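/- arXiv:1206.2790 — 5 statements merged into one kernel-verified Lean document; each statement's English description precedes it below -/
import Mathlib

section
/- Let X, Y : ℕ → Option (EuclideanSpace ℝ (Fin 2)) be persistence diagrams in the countable model (each with infinitely many indices mapped to none and with ∑' i, c (X i) none < ∞ and ∑' i, c (Y i) none < ∞). Then the infimum defining the squared L²-Wasserstein distance is attained: there exists a bijection e : ℕ ≃ ℕ such that ∑' i, c (X i) (Y (e i)) = ⨅ (e' : ℕ ≃ ℕ), ∑' i, c (X i) (Y (e' i)). -/
/-- Cost between two generalized points of a persistence diagram in the countable
model: `some x` is an off-diagonal point, `none` is a copy of the diagonal. -/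
noncomputable def diagCost (p q : Option (EuclideanSpace ℝ (Fin 2))) : ℝ :=
  match p, q with
  | some x, some y => ‖x - y‖ ^ 2
  | some x, none => (x 0 - x 1) ^ 2 / 2
  | none, some y => (y 0 - y 1) ^ 2 / 2
  | none, none => 0

open Filter Topology Set

namespace DiagProofAux

abbrev E2 := EuclideanSpace ℝ (Fin 2)

lemma dc_nonneg (p q : Option E2) : 0 ≤ diagCost p q := by
  cases p <;> cases q <;> simp [diagCost] <;> positivity

lemma dc_comm (p q : Option E2) : diagCost p q = diagCost q p := by
  cases p <;> cases q <;> simp [diagCost, norm_sub_rev]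

lemma norm_sq_eq (z : E2) : ‖z‖ ^ 2 = (z 0) ^ 2 + (z 1) ^ 2 := by
  rw [EuclideanSpace.norm_eq, Real.sq_sqrt (by positivity)]
  simp [Fin.sum_univ_two, sq_abs]

lemma dc_some_some (x y : E2) :
    diagCost (some x) (some y) = (x 0 - y 0) ^ 2 + (x 1 - y 1) ^ 2 := by
  simp only [diagCost, norm_sq_eq]
  congr 1

lemma sqrt_half_sq (u : ℝ) : Real.sqrt (u ^ 2 / 2) = |u| / Real.sqrt 2 := by
  rw [Real.sqrt_div' (u ^ 2) (by norm_num), Real.sqrt_sq_eq_abs]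

lemma dc_key (p q : Option E2) :
    diagCost p none ≤ diagCost p q +
      2 * Real.sqrt (diagCost p none) * Real.sqrt (diagCost q none) := by
  cases p with
  | none =>
    have h1 := dc_nonneg (none : Option E2) q
    have h2 : Real.sqrt (diagCost q none) ≥ 0 := Real.sqrt_nonneg _
    have h0 : diagCost (none : Option E2) none = 0 := rfl
    rw [h0, Real.sqrt_zero]
    nlinarith
  | some x =>
    cases q with
    | none => simp [diagCost]
    | some y =>
      have h1 : ((x 0 - x 1) - (y 0 - y 1)) ^ 2 / 2 ≤ diagCost (some x) (some y) := by
        rw [dc_some_some]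
        nlinarith [sq_nonneg ((x 0 - y 0) + (x 1 - y 1))]
      have h3 : Real.sqrt (diagCost (some y) none) = |y 0 - y 1| / Real.sqrt 2 := by
        show Real.sqrt ((y 0 - y 1) ^ 2 / 2) = _
        exact sqrt_half_sq _
      have hs2 : Real.sqrt 2 * Real.sqrt 2 = 2 := Real.mul_self_sqrt (by norm_num)
      have h4 : 2 * (|x 0 - x 1| / Real.sqrt 2) * (|y 0 - y 1| / Real.sqrt 2)
          = |x 0 - x 1| * |y 0 - y 1| := by
        field_simp
        rw [Real.sq_sqrt (by norm_num : (0:ℝ) ≤ 2)]; ring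
      have h5 : (x 0 - x 1) * (y 0 - y 1) ≤ |x 0 - x 1| * |y 0 - y 1| := by
        calc (x 0 - x 1) * (y 0 - y 1) ≤ |(x 0 - x 1) * (y 0 - y 1)| := le_abs_self _
        _ = _ := abs_mul _ _
      show (x 0 - x 1) ^ 2 / 2 ≤ diagCost (some x) (some y)
          + 2 * Real.sqrt ((x 0 - x 1) ^ 2 / 2) * Real.sqrt (diagCost (some y) none)
      rw [sqrt_half_sq, h3, h4]
      have h6 : (x 0 - x 1) ^ 2 / 2 ≤ (x 0 - x 1 - (y 0 - y 1)) ^ 2 / 2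
          + (x 0 - x 1) * (y 0 - y 1) := by nlinarith [sq_nonneg (y 0 - y 1)]
      linarith


section Part2
open ENNReal
open MeasureTheory in
lemma fatou_tsum (v : ℕ → ℕ → ℝ≥0∞) :
    ∑' i, Filter.liminf (fun n => v n i) Filter.atTop
      ≤ Filter.liminf (fun n => ∑' i, v n i) Filter.atTop := by
  have h1 : ∀ n : ℕ, ∑' i, v n i = ∫⁻ i, v n i ∂(Measure.count) :=
    fun n => (lintegral_count _).symm
  have h2 : ∑' i, Filter.liminf (fun n => v n i) Filter.atTop
      = ∫⁻ i, Filter.liminf (fun n => v n i) Filter.atTop ∂(Measure.count) :=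
    (lintegral_count _).symm
  rw [h2]
  simp only [h1]
  exact lintegral_liminf_le (fun n => measurable_of_countable _)

lemma liminf_aux (po : Option E2) (q : ℕ → Option E2)
    (hq : Filter.Tendsto (fun n => diagCost (q n) none) Filter.atTop (𝓝 0)) :
    ENNReal.ofReal (diagCost po none)
      ≤ Filter.liminf (fun n => ENNReal.ofReal (diagCost po (q n))) Filter.atTop := by
  have hb : ∀ n, ENNReal.ofReal (diagCost po none
        - 2 * Real.sqrt (diagCost po none) * Real.sqrt (diagCost (q n) none))
      ≤ ENNReal.ofReal (diagCost po (q n)) :=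
    fun n => ENNReal.ofReal_le_ofReal (by have := dc_key po (q n); linarith)
  have h1 : Filter.Tendsto (fun n => Real.sqrt (diagCost (q n) none))
      Filter.atTop (𝓝 0) := by
    have := (Real.continuous_sqrt.tendsto 0).comp hq
    simpa [Function.comp_def] using this
  have h2 : Filter.Tendsto (fun n => diagCost po none
        - 2 * Real.sqrt (diagCost po none) * Real.sqrt (diagCost (q n) none))
      Filter.atTop (𝓝 (diagCost po none)) := by
    have h3 := h1.const_mul (2 * Real.sqrt (diagCost po none))
    have := h3.const_sub (diagCost po none)
    simpa [mul_assoc] using this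
  have ht : Filter.Tendsto (fun n => ENNReal.ofReal (diagCost po none
        - 2 * Real.sqrt (diagCost po none) * Real.sqrt (diagCost (q n) none)))
      Filter.atTop (𝓝 (ENNReal.ofReal (diagCost po none))) :=
    (ENNReal.continuous_ofReal.tendsto _).comp h2
  calc ENNReal.ofReal (diagCost po none)
      = Filter.liminf (fun n => ENNReal.ofReal (diagCost po none
        - 2 * Real.sqrt (diagCost po none) * Real.sqrt (diagCost (q n) none)))
          Filter.atTop := ht.liminf_eq.symm
    _ ≤ _ := Filter.liminf_le_liminf (Filter.Eventually.of_forall hb)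

/-- the encoding sequence -/
noncomputable def fr (k : ℕ) : ℝ := ((k : ℝ) + 1)⁻¹

lemma fr_pos (k : ℕ) : 0 < fr k := by
  show 0 < ((k : ℝ) + 1)⁻¹
  positivity

lemma fr_anti : StrictAnti fr := by
  intro a b h
  show ((b : ℝ) + 1)⁻¹ < ((a : ℝ) + 1)⁻¹
  apply inv_strictAnti₀ (by positivity)
  exact_mod_cast by omega

lemma fr_tendsto : Filter.Tendsto fr Filter.atTop (𝓝 0) := by
  have := tendsto_one_div_add_atTop_nhds_zero_nat (𝕜 := ℝ)
  simp only [one_div] at this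
  exact this

lemma fr_notin (k : ℕ) : fr k ≠ 0 := ne_of_gt (fr_pos k)

lemma D1 {u : ℕ → ℕ} {j : ℕ}
    (h : Filter.Tendsto (fun n => fr (u n)) Filter.atTop (𝓝 (fr j))) :
    ∀ᶠ n in Filter.atTop, u n = j := by
  have h1 : ∀ᶠ n in Filter.atTop, fr (j + 1) < fr (u n) :=
    h.eventually (eventually_gt_nhds (fr_anti (by omega)))
  have hub : ∀ n, fr (j + 1) < fr (u n) → u n ≤ j := by
    intro n hn
    by_contra hc
    exact absurd hn (not_lt.2 (fr_anti.antitone (by omega : j + 1 ≤ u n)))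
  cases' Nat.eq_zero_or_pos j with hj hj
  · filter_upwards [h1] with n hn
    have := hub n hn
    omega
  · have h2 : ∀ᶠ n in Filter.atTop, fr (u n) < fr (j - 1) :=
      h.eventually (eventually_lt_nhds (fr_anti (by omega)))
    filter_upwards [h1, h2] with n hn1 hn2
    have ha := hub n hn1
    have hb : ¬ (u n ≤ j - 1) := by
      intro hc
      exact absurd hn2 (not_lt.2 (fr_anti.antitone hc))
    omega

lemma D2 {u : ℕ → ℕ}
    (h : Filter.Tendsto (fun n => fr (u n)) Filter.atTop (𝓝 0)) :
    Filter.Tendsto u Filter.atTop Filter.atTop := by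
  rw [Filter.tendsto_atTop]
  intro b
  have h1 : ∀ᶠ n in Filter.atTop, fr (u n) < fr b :=
    h.eventually (eventually_lt_nhds (fr_pos b))
  filter_upwards [h1] with n hn
  by_contra hc
  push_neg at hc
  exact absurd hn (not_lt.2 (fr_anti.antitone hc.le))

lemma exists_subequiv (s t : Set ℕ) (ht : t.Infinite) :
    ∃ t' : Set ℕ, t' ⊆ t ∧ (t \ t').Infinite ∧ Nonempty (s ≃ t') := by
  classical
  haveI := ht.to_subtype
  let eqt : ↥t ≃ ℕ := (Nat.Subtype.denumerable t).eqv
  let g : s → ℕ := fun x => (eqt.symm (2 * x.1) : ℕ)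
  have ginj : Function.Injective g := by
    intro a b hab
    have := eqt.symm.injective (Subtype.val_injective hab)
    have : (2 : ℕ) * a.1 = 2 * b.1 := by simpa using this
    exact Subtype.val_injective (by omega)
  refine ⟨Set.range g, ?_, ?_, ⟨Equiv.ofInjective g ginj⟩⟩
  · rintro _ ⟨x, rfl⟩
    exact (eqt.symm (2 * x.1)).2
  · apply Set.infinite_of_injective_forall_mem
      (f := fun n : ℕ => ((eqt.symm (2 * n + 1) : ℕ)))
    · intro a b hab
      have := eqt.symm.injective (Subtype.val_injective hab)
      simpa using this
    · intro n
      refine ⟨(eqt.symm (2 * n + 1)).2, ?_⟩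
      rintro ⟨x, hx⟩
      have := eqt.symm.injective (Subtype.val_injective hx)
      omega

lemma infequiv (s t : Set ℕ) (hs : s.Infinite) (ht : t.Infinite) :
    Nonempty (↥s ≃ ↥t) := by
  classical
  haveI := hs.to_subtype
  haveI := ht.to_subtype
  exact ⟨((Nat.Subtype.denumerable s).eqv).trans ((Nat.Subtype.denumerable t).eqv).symm⟩

lemma liminf_add_le' (u v : ℕ → ℝ≥0∞) :
    Filter.liminf u Filter.atTop + Filter.liminf v Filter.atTop
      ≤ Filter.liminf (fun n => u n + v n) Filter.atTop := by
  rw [Filter.liminf_eq_iSup_iInf_of_nat, Filter.liminf_eq_iSup_iInf_of_nat,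
    Filter.liminf_eq_iSup_iInf_of_nat]
  apply ENNReal.iSup_add_iSup_le
  intro i j
  apply le_iSup_of_le (max i j)
  refine le_iInf₂ (fun k hk => ?_)
  exact add_le_add (iInf₂_le_of_le k (le_trans (le_max_left i j) hk) (le_refl _))
    (iInf₂_le_of_le k (le_trans (le_max_right i j) hk) (le_refl _))

end Part2
section Assemble
open ENNReal

variable (X Y : ℕ → Option E2) (p r : ℕ → Option ℕ)

noncomputable def w1 (i : ℕ) : ℝ≥0∞ :=
  Option.elim (p i) (ENNReal.ofReal (diagCost (X i) none))
    (fun j => if i ≤ j then ENNReal.ofReal (diagCost (X i) (Y j)) else 0)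

noncomputable def w2 (j : ℕ) : ℝ≥0∞ :=
  Option.elim (r j) (ENNReal.ofReal (diagCost none (Y j)))
    (fun i => if i ≤ j then 0 else ENNReal.ofReal (diagCost (X i) (Y j)))

theorem assemble (hX : {i | X i = none}.Infinite) (hY : {j | Y j = none}.Infinite)
    (hpr : ∀ i j, p i = some j ↔ r j = some i) :
    ∃ e : ℕ ≃ ℕ, ∑' i, ENNReal.ofReal (diagCost (X i) (Y (e i)))
      ≤ (∑' i, w1 X Y p i) + ∑' j, w2 X Y r j := by
  classical
  set PX : Set ℕ := {i | X i ≠ none} with hPXdef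
  set PY : Set ℕ := {j | Y j ≠ none} with hPYdef
  set MX : Set ℕ := {i | ∃ j, p i = some j ∧ X i ≠ none ∧ Y j ≠ none} with hMXdef
  set MY : Set ℕ := {j | ∃ i, p i = some j ∧ X i ≠ none ∧ Y j ≠ none} with hMYdef
  have hMXPX : MX ⊆ PX := fun i hi => hi.choose_spec.2.1
  have hMYPY : MY ⊆ PY := fun j hj => hj.choose_spec.2.2
  have hNXc : (PXᶜ : Set ℕ) = {i | X i = none} := by
    ext i; simp [hPXdef]
  have hNYc : (PYᶜ : Set ℕ) = {j | Y j = none} := by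
    ext j; simp [hPYdef]
  have hNX : (PXᶜ : Set ℕ).Infinite := by rw [hNXc]; exact hX
  have hNY : (PYᶜ : Set ℕ).Infinite := by rw [hNYc]; exact hY
  have pinj : ∀ {i i' j : ℕ}, p i = some j → p i' = some j → i = i' := by
    intro i i' j h h'
    have h1 := (hpr i j).1 h
    have h2 := (hpr i' j).1 h'
    rw [h1] at h2
    exact Option.some_injective _ h2
  -- the equivalence on matched pairs
  let f1 : ↥MX → ↥MY := fun x => ⟨x.2.choose, x.1, x.2.choose_spec⟩
  have hf1p : ∀ x : ↥MX, p x.1 = some (f1 x).1 := fun x => x.2.choose_spec.1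
  have hf1bij : Function.Bijective f1 := by
    constructor
    · intro a b hab
      have h1 := hf1p a
      have h2 := hf1p b
      rw [Subtype.ext_iff] at hab
      rw [hab] at h1
      exact Subtype.ext (pinj h1 h2)
    · intro y
      have hy := y.2
      obtain ⟨i, hi⟩ := hy
      refine ⟨⟨i, ⟨y.1, hi⟩⟩, ?_⟩
      apply Subtype.ext
      have h1 : p i = some ((f1 ⟨i, ⟨y.1, hi⟩⟩).1) := hf1p ⟨i, ⟨y.1, hi⟩⟩
      have h2 := hi.1.symm.trans h1
      exact (Option.some_injective _ h2).symm
  let e1 : ↥MX ≃ ↥MY := Equiv.ofBijective f1 hf1bij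
  have he1p : ∀ x : ↥MX, p x.1 = some ((e1 x).1) := hf1p
  -- unmatched proper points of X into diagonal copies of Y, etc.
  obtain ⟨Sα, hSαsub, hSαinf, ⟨e2⟩⟩ := exists_subequiv (PX \ MX) (PYᶜ) hNY
  obtain ⟨Sβ, hSβsub, hSβinf, ⟨e3⟩⟩ := exists_subequiv (PY \ MY) (PXᶜ) hNX
  obtain ⟨e4⟩ := infequiv (PXᶜ \ Sβ) (PYᶜ \ Sα) hSβinf hSαinf
  let dX : ℕ ≃ (↥MX ⊕ ↥(PX \ MX)) ⊕ (↥Sβ ⊕ ↥(PXᶜ \ Sβ)) :=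
    (Equiv.Set.sumCompl PX).symm.trans
      (Equiv.sumCongr (Equiv.Set.sumDiffSubset hMXPX).symm
        (Equiv.Set.sumDiffSubset hSβsub).symm)
  let dY : ℕ ≃ (↥MY ⊕ ↥(PY \ MY)) ⊕ (↥Sα ⊕ ↥(PYᶜ \ Sα)) :=
    (Equiv.Set.sumCompl PY).symm.trans
      (Equiv.sumCongr (Equiv.Set.sumDiffSubset hMYPY).symm
        (Equiv.Set.sumDiffSubset hSαsub).symm)
  let mid : (↥MX ⊕ ↥(PX \ MX)) ⊕ (↥Sβ ⊕ ↥(PXᶜ \ Sβ))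
      ≃ (↥MY ⊕ ↥(PY \ MY)) ⊕ (↥Sα ⊕ ↥(PYᶜ \ Sα)) :=
    (Equiv.sumCongr (Equiv.sumCongr e1 e2) (Equiv.sumCongr e3.symm e4)).trans
      (Equiv.sumSumSumComm _ _ _ _)
  let e : ℕ ≃ ℕ := dX.trans (mid.trans dY.symm)
  -- evaluation lemmas for e
  have hdY1 : ∀ y : ↥MY, dY.symm (Sum.inl (Sum.inl y)) = y.1 := by
    intro y
    show (Equiv.Set.sumCompl PY) ((Equiv.sumCongr (Equiv.Set.sumDiffSubset hMYPY).symm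
        (Equiv.Set.sumDiffSubset hSαsub).symm).symm (Sum.inl (Sum.inl y))) = y.1
    simp
  have hdY2 : ∀ b : ↥(PY \ MY), dY.symm (Sum.inl (Sum.inr b)) = b.1 := by
    intro b
    show (Equiv.Set.sumCompl PY) ((Equiv.sumCongr (Equiv.Set.sumDiffSubset hMYPY).symm
        (Equiv.Set.sumDiffSubset hSαsub).symm).symm (Sum.inl (Sum.inr b))) = b.1
    simp
  have hdY3 : ∀ s : ↥Sα, dY.symm (Sum.inr (Sum.inl s)) = s.1 := by
    intro s
    show (Equiv.Set.sumCompl PY) ((Equiv.sumCongr (Equiv.Set.sumDiffSubset hMYPY).symm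
        (Equiv.Set.sumDiffSubset hSαsub).symm).symm (Sum.inr (Sum.inl s))) = s.1
    simp
  have hdY4 : ∀ s : ↥(PYᶜ \ Sα), dY.symm (Sum.inr (Sum.inr s)) = s.1 := by
    intro s
    show (Equiv.Set.sumCompl PY) ((Equiv.sumCongr (Equiv.Set.sumDiffSubset hMYPY).symm
        (Equiv.Set.sumDiffSubset hSαsub).symm).symm (Sum.inr (Sum.inr s))) = s.1
    simp
  have hbe : ∀ i : ℕ,
      (X i ≠ none ∧ p i = some (e i) ∧ Y (e i) ≠ none) ∨
      (X i ≠ none ∧ i ∉ MX ∧ Y (e i) = none) ∨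
      (X i = none ∧ Y (e i) ≠ none ∧ e i ∉ MY) ∨
      (X i = none ∧ Y (e i) = none) := by
    intro i
    by_cases hx : i ∈ PX
    · have h1 : (Equiv.Set.sumCompl PX).symm i = Sum.inl ⟨i, hx⟩ :=
        Equiv.Set.sumCompl_symm_apply_of_mem hx
      by_cases him : i ∈ MX
      · have h2 : (Equiv.Set.sumDiffSubset hMXPX).symm ⟨i, hx⟩ = Sum.inl ⟨i, him⟩ :=
          Equiv.Set.sumDiffSubset_symm_apply_of_mem hMXPX him
        have hei : e i = ((e1 ⟨i, him⟩).1 : ℕ) := by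
          show dY.symm (mid (dX i)) = _
          have hdx : dX i = Sum.inl (Sum.inl ⟨i, him⟩) := by
            show (Equiv.sumCongr (Equiv.Set.sumDiffSubset hMXPX).symm
              (Equiv.Set.sumDiffSubset hSβsub).symm) ((Equiv.Set.sumCompl PX).symm i) = _
            rw [h1]
            simp [h2]
          rw [hdx]
          have hmid : mid (Sum.inl (Sum.inl ⟨i, him⟩))
              = Sum.inl (Sum.inl (e1 ⟨i, him⟩)) := rfl
          rw [hmid, hdY1]
        left
        have hsp := he1p ⟨i, him⟩
        refine ⟨hx, ?_, ?_⟩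
        · rw [hei]; exact hsp
        · rw [hei]; exact (e1 ⟨i, him⟩).2.choose_spec.2.2
      · have h2 : (Equiv.Set.sumDiffSubset hMXPX).symm ⟨i, hx⟩ = Sum.inr ⟨i, hx, him⟩ :=
          Equiv.Set.sumDiffSubset_symm_apply_of_notMem hMXPX him
        have hei : e i = ((e2 ⟨i, hx, him⟩).1 : ℕ) := by
          show dY.symm (mid (dX i)) = _
          have hdx : dX i = Sum.inl (Sum.inr ⟨i, hx, him⟩) := by
            show (Equiv.sumCongr (Equiv.Set.sumDiffSubset hMXPX).symm
              (Equiv.Set.sumDiffSubset hSβsub).symm) ((Equiv.Set.sumCompl PX).symm i) = _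
            rw [h1]
            simp [h2]
          rw [hdx]
          have hmid : mid (Sum.inl (Sum.inr ⟨i, hx, him⟩))
              = Sum.inr (Sum.inl (e2 ⟨i, hx, him⟩)) := rfl
          rw [hmid, hdY3]
        right; left
        refine ⟨hx, him, ?_⟩
        have : (e i) ∈ PYᶜ := by rw [hei]; exact hSαsub (e2 ⟨i, hx, him⟩).2
        rw [hNYc] at this
        exact this
    · have h1 : (Equiv.Set.sumCompl PX).symm i = Sum.inr ⟨i, hx⟩ :=
        Equiv.Set.sumCompl_symm_apply_of_notMem hx
      have hxn : X i = none := by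
        by_contra hc
        exact hx hc
      by_cases hsb : i ∈ Sβ
      · have h2 : (Equiv.Set.sumDiffSubset hSβsub).symm ⟨i, hx⟩ = Sum.inl ⟨i, hsb⟩ :=
          Equiv.Set.sumDiffSubset_symm_apply_of_mem hSβsub hsb
        have hei : e i = ((e3.symm ⟨i, hsb⟩).1 : ℕ) := by
          show dY.symm (mid (dX i)) = _
          have hdx : dX i = Sum.inr (Sum.inl ⟨i, hsb⟩) := by
            show (Equiv.sumCongr (Equiv.Set.sumDiffSubset hMXPX).symm
              (Equiv.Set.sumDiffSubset hSβsub).symm) ((Equiv.Set.sumCompl PX).symm i) = _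
            rw [h1]
            simp [h2]
          rw [hdx]
          have hmid : mid (Sum.inr (Sum.inl ⟨i, hsb⟩))
              = Sum.inl (Sum.inr (e3.symm ⟨i, hsb⟩)) := rfl
          rw [hmid, hdY2]
        right; right; left
        refine ⟨hxn, ?_, ?_⟩
        · have : (e i) ∈ PY := by rw [hei]; exact (e3.symm ⟨i, hsb⟩).2.1
          exact this
        · have : (e i) ∉ MY := by rw [hei]; exact (e3.symm ⟨i, hsb⟩).2.2
          exact this
      · have h2 : (Equiv.Set.sumDiffSubset hSβsub).symm ⟨i, hx⟩ = Sum.inr ⟨i, hx, hsb⟩ :=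
          Equiv.Set.sumDiffSubset_symm_apply_of_notMem hSβsub hsb
        have hei : e i = ((e4 ⟨i, hx, hsb⟩).1 : ℕ) := by
          show dY.symm (mid (dX i)) = _
          have hdx : dX i = Sum.inr (Sum.inr ⟨i, hx, hsb⟩) := by
            show (Equiv.sumCongr (Equiv.Set.sumDiffSubset hMXPX).symm
              (Equiv.Set.sumDiffSubset hSβsub).symm) ((Equiv.Set.sumCompl PX).symm i) = _
            rw [h1]
            simp [h2]
          rw [hdx]
          have hmid : mid (Sum.inr (Sum.inr ⟨i, hx, hsb⟩))
              = Sum.inr (Sum.inr (e4 ⟨i, hx, hsb⟩)) := rfl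
          rw [hmid, hdY4]
        right; right; right
        refine ⟨hxn, ?_⟩
        have : (e i) ∈ PYᶜ := by rw [hei]; exact ((e4 ⟨i, hx, hsb⟩).2).1
        rw [hNYc] at this
        exact this
  -- merged bound function, even indices = w1, odd = w2
  let W : ℕ → ℝ≥0∞ := fun n => if n % 2 = 0 then w1 X Y p (n / 2) else w2 X Y r (n / 2)
  have hWeven : ∀ k, W (2 * k) = w1 X Y p k := by
    intro k
    have h1 : (2 * k) % 2 = 0 := by omega
    have h2 : (2 * k) / 2 = k := by omega
    simp only [W, h1, h2, if_pos]
  have hWodd : ∀ k, W (2 * k + 1) = w2 X Y r k := by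
    intro k
    have h1 : ¬ ((2 * k + 1) % 2 = 0) := by omega
    have h2 : (2 * k + 1) / 2 = k := by omega
    simp only [W, h1, h2, if_neg, ite_false]
  have hWsum : ∑' n, W n = (∑' i, w1 X Y p i) + ∑' j, w2 X Y r j := by
    have h := tsum_even_add_odd (f := W) ENNReal.summable ENNReal.summable
    rw [← h]
    congr 1
    · exact tsum_congr hWeven
    · exact tsum_congr hWodd
  -- helper facts
  have hXMY : ∀ {i' j : ℕ}, p i' = some j → Y j ≠ none → j ∉ MY → X i' = none := by
    intro i' j hp hy hm
    by_contra hc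
    exact hm ⟨i', hp, hc, hy⟩
  have hMXY : ∀ {i' j : ℕ}, X i' ≠ none → i' ∉ MX → p i' = some j → Y j = none := by
    intro i' j hx hm hp
    by_contra hc
    exact hm ⟨j, hp, hx, hc⟩
  -- certificate injection and its decoder
  let ι : ℕ → ℕ := fun i =>
    if X i = none then
      if Y (e i) = none then
        Option.elim (p i) (2 * i) (fun j => if i ≤ j then 2 * j + 1 else 2 * i)
      else
        Option.elim (r (e i)) (2 * (e i) + 1)
          (fun i' => if i' ≤ e i then 2 * i' else 2 * (e i) + 1)
    else
      Option.elim (p i) (2 * i) (fun j => if i ≤ j then 2 * i else 2 * j + 1)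
  let dec : ℕ → ℕ := fun n =>
    if n % 2 = 0 then
      Option.elim (p (n / 2)) (n / 2)
        (fun j => if n / 2 ≤ j then (if X (n / 2) = none then e.symm j else n / 2) else n / 2)
    else
      Option.elim (r (n / 2)) (e.symm (n / 2))
        (fun i' => if i' ≤ n / 2 then i' else (if X i' = none then e.symm (n / 2) else i'))
  have hdece : ∀ k, dec (2 * k) =
      Option.elim (p k) k
        (fun j => if k ≤ j then (if X k = none then e.symm j else k) else k) := by
    intro k
    have h1 : (2 * k) % 2 = 0 := by omega
    have h2 : (2 * k) / 2 = k := by omega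
    simp only [dec, h1, h2, if_pos]
  have hdeco : ∀ k, dec (2 * k + 1) =
      Option.elim (r k) (e.symm k)
        (fun i' => if i' ≤ k then i' else (if X i' = none then e.symm k else i')) := by
    intro k
    have h1 : ¬ ((2 * k + 1) % 2 = 0) := by omega
    have h2 : (2 * k + 1) / 2 = k := by omega
    simp only [dec, h1, h2, if_neg, ite_false]
  have hdec : ∀ i, dec (ι i) = i := by
    intro i
    have hsymm : e.symm (e i) = i := e.symm_apply_apply i
    rcases hbe i with ⟨hXi, hpi, hYei⟩ | ⟨hXi, hiMX, hYei⟩ | ⟨hXi, hYei, heiMY⟩ | ⟨hXi, hYei⟩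
    · -- cat1 : matched proper pair
      have hri : r (e i) = some i := (hpr i (e i)).1 hpi
      by_cases hij : i ≤ e i
      · have hι : ι i = 2 * i := by simp only [ι, if_neg hXi, hpi, Option.elim_some, if_pos hij]
        rw [hι, hdece, hpi]
        simp only [Option.elim_some]
        rw [if_pos hij, if_neg hXi]
      · have hι : ι i = 2 * (e i) + 1 := by
          simp only [ι, if_neg hXi, hpi, Option.elim_some, if_neg hij]
        rw [hι, hdeco, hri]
        simp only [Option.elim_some]
        rw [if_neg hij, if_neg hXi]
    · -- cat2 : unmatched proper X point
      cases hp : p i with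
      | none =>
        have hι : ι i = 2 * i := by simp only [ι, if_neg hXi, hp, Option.elim_none]
        rw [hι, hdece, hp]
        simp only [Option.elim_none]
      | some j =>
        have hri : r j = some i := (hpr i j).1 hp
        by_cases hij : i ≤ j
        · have hι : ι i = 2 * i := by
            simp only [ι, if_neg hXi, hp, Option.elim_some, if_pos hij]
          rw [hι, hdece, hp]
          simp only [Option.elim_some]
          rw [if_pos hij, if_neg hXi]
        · have hι : ι i = 2 * j + 1 := by
            simp only [ι, if_neg hXi, hp, Option.elim_some, if_neg hij]
          rw [hι, hdeco, hri]
          simp only [Option.elim_some]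
          rw [if_neg hij, if_neg hXi]
    · -- cat3 : diagonal copy of X matched to an unmatched proper Y point
      cases hr : r (e i) with
      | none =>
        have hι : ι i = 2 * (e i) + 1 := by
          simp only [ι, if_pos hXi, if_neg hYei, hr, Option.elim_none]
        rw [hι, hdeco, hr]
        simp only [Option.elim_none]
        exact hsymm
      | some i' =>
        have hpi' : p i' = some (e i) := (hpr i' (e i)).2 hr
        have hXi' : X i' = none := hXMY hpi' hYei heiMY
        by_cases hij : i' ≤ e i
        · have hι : ι i = 2 * i' := by
            simp only [ι, if_pos hXi, if_neg hYei, hr, Option.elim_some, if_pos hij]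
          rw [hι, hdece, hpi']
          simp only [Option.elim_some]
          rw [if_pos hij, if_pos hXi']
          exact hsymm
        · have hι : ι i = 2 * (e i) + 1 := by
            simp only [ι, if_pos hXi, if_neg hYei, hr, Option.elim_some, if_neg hij]
          rw [hι, hdeco, hr]
          simp only [Option.elim_some]
          rw [if_neg hij, if_pos hXi']
          exact hsymm
    · -- cat4 : diagonal to diagonal
      cases hp : p i with
      | none =>
        have hι : ι i = 2 * i := by
          simp only [ι, if_pos hXi, if_pos hYei, hp, Option.elim_none]
        rw [hι, hdece, hp]
        simp only [Option.elim_none]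
      | some j =>
        have hri : r j = some i := (hpr i j).1 hp
        by_cases hij : i ≤ j
        · have hι : ι i = 2 * j + 1 := by
            simp only [ι, if_pos hXi, if_pos hYei, hp, Option.elim_some, if_pos hij]
          rw [hι, hdeco, hri]
          simp only [Option.elim_some, if_pos hij]
        · have hι : ι i = 2 * i := by
            simp only [ι, if_pos hXi, if_pos hYei, hp, Option.elim_some, if_neg hij]
          rw [hι, hdece, hp]
          simp only [Option.elim_some, if_neg hij]
  have hle : ∀ i, ENNReal.ofReal (diagCost (X i) (Y (e i))) ≤ W (ι i) := by
    intro i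
    rcases hbe i with ⟨hXi, hpi, hYei⟩ | ⟨hXi, hiMX, hYei⟩ | ⟨hXi, hYei, heiMY⟩ | ⟨hXi, hYei⟩
    · -- cat1
      have hri : r (e i) = some i := (hpr i (e i)).1 hpi
      by_cases hij : i ≤ e i
      · have hι : ι i = 2 * i := by simp only [ι, if_neg hXi, hpi, Option.elim_some, if_pos hij]
        rw [hι, hWeven]
        simp only [w1, hpi, Option.elim_some, if_pos hij, le_refl]
      · have hι : ι i = 2 * (e i) + 1 := by
          simp only [ι, if_neg hXi, hpi, Option.elim_some, if_neg hij]
        rw [hι, hWodd]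
        simp only [w2, hri, Option.elim_some, if_neg hij, le_refl]
    · -- cat2
      rw [hYei]
      cases hp : p i with
      | none =>
        have hι : ι i = 2 * i := by simp only [ι, if_neg hXi, hp, Option.elim_none]
        rw [hι, hWeven]
        simp only [w1, hp, Option.elim_none, le_refl]
      | some j =>
        have hYj : Y j = none := hMXY hXi hiMX hp
        have hri : r j = some i := (hpr i j).1 hp
        by_cases hij : i ≤ j
        · have hι : ι i = 2 * i := by
            simp only [ι, if_neg hXi, hp, Option.elim_some, if_pos hij]
          rw [hι, hWeven]
          simp only [w1, hp, Option.elim_some, if_pos hij, hYj, le_refl]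
        · have hι : ι i = 2 * j + 1 := by
            simp only [ι, if_neg hXi, hp, Option.elim_some, if_neg hij]
          rw [hι, hWodd]
          simp only [w2, hri, Option.elim_some, if_neg hij, hYj, le_refl]
    · -- cat3
      rw [hXi]
      cases hr : r (e i) with
      | none =>
        have hι : ι i = 2 * (e i) + 1 := by
          simp only [ι, if_pos hXi, if_neg hYei, hr, Option.elim_none]
        rw [hι, hWodd]
        simp only [w2, hr, Option.elim_none, le_refl]
      | some i' =>
        have hpi' : p i' = some (e i) := (hpr i' (e i)).2 hr
        have hXi' : X i' = none := hXMY hpi' hYei heiMY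
        by_cases hij : i' ≤ e i
        · have hι : ι i = 2 * i' := by
            simp only [ι, if_pos hXi, if_neg hYei, hr, Option.elim_some, if_pos hij]
          rw [hι, hWeven]
          simp only [w1, hpi', Option.elim_some, if_pos hij, hXi', le_refl]
        · have hι : ι i = 2 * (e i) + 1 := by
            simp only [ι, if_pos hXi, if_neg hYei, hr, Option.elim_some, if_neg hij]
          rw [hι, hWodd]
          simp only [w2, hr, Option.elim_some, if_neg hij, hXi', le_refl]
    · -- cat4
      rw [hXi, hYei]
      have h0 : diagCost none none = 0 := rfl
      rw [h0]
      simp only [ENNReal.ofReal_zero]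
      exact zero_le
  refine ⟨e, ?_⟩
  calc ∑' i, ENNReal.ofReal (diagCost (X i) (Y (e i)))
      ≤ ∑' n, W n :=
        ENNReal.summable.tsum_le_tsum_of_inj ι (Function.LeftInverse.injective hdec)
          (fun c _ => zero_le) hle ENNReal.summable
    _ = _ := hWsum
end Assemble
section Main
open ENNReal Filter

set_option maxHeartbeats 1000000 in
theorem exists_min_ennreal (X Y : ℕ → Option E2)
    (hX : {i | X i = none}.Infinite) (hY : {j | Y j = none}.Infinite)
    (hXs : Summable fun i => diagCost (X i) none)
    (hYs : Summable fun i => diagCost (Y i) none) :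
    ∃ e₀ : ℕ ≃ ℕ, ∀ e : ℕ ≃ ℕ,
      (∑' i, ENNReal.ofReal (diagCost (X i) (Y (e₀ i))))
        ≤ ∑' i, ENNReal.ofReal (diagCost (X i) (Y (e i))) := by
  classical
  set T : (ℕ ≃ ℕ) → ℝ≥0∞ := fun e => ∑' i, ENNReal.ofReal (diagCost (X i) (Y (e i))) with hT
  set m := ⨅ e : ℕ ≃ ℕ, T e with hm
  by_cases htop : m = ⊤
  · refine ⟨Equiv.refl ℕ, fun e => ?_⟩
    have h1 : T e = ⊤ := top_unique (htop ▸ iInf_le T e)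
    show T (Equiv.refl ℕ) ≤ T e
    rw [h1]
    exact le_top
  · have hex : ∀ n : ℕ, ∃ q : ℕ ≃ ℕ, T q < m + ((n : ℝ≥0∞) + 1)⁻¹ := by
      intro n
      have hne : ((n : ℝ≥0∞) + 1)⁻¹ ≠ 0 := by simp
      have hlt : m < m + ((n : ℝ≥0∞) + 1)⁻¹ := ENNReal.lt_add_right htop hne
      rw [hm] at hlt
      exact iInf_lt_iff.mp hlt
    choose en hen using hex
    set S : Set ℝ := insert 0 (Set.range fr) with hS
    have hScomp : IsCompact S := fr_tendsto.isCompact_insert_range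
    have hKcomp : IsCompact ((Set.univ.pi fun _ : ℕ => S) ×ˢ (Set.univ.pi fun _ : ℕ => S)) :=
      (isCompact_univ_pi fun _ => hScomp).prod (isCompact_univ_pi fun _ => hScomp)
    set g : ℕ → (ℕ → ℝ) × (ℕ → ℝ) :=
      fun n => (fun i => fr (en n i), fun j => fr ((en n).symm j)) with hg
    have hgK : ∀ n, g n ∈ (Set.univ.pi fun _ : ℕ => S) ×ˢ (Set.univ.pi fun _ : ℕ => S) := by
      intro n
      constructor
      · intro i _; exact Set.mem_insert_of_mem _ ⟨_, rfl⟩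
      · intro j _; exact Set.mem_insert_of_mem _ ⟨_, rfl⟩
    obtain ⟨a, haK, φ, hφ, hconv⟩ := hKcomp.tendsto_subseq hgK
    have hconv1 : ∀ i, Tendsto (fun n => fr (en (φ n) i)) atTop (𝓝 (a.1 i)) := by
      intro i
      have h1 : Tendsto (fun n => (g (φ n)).1) atTop (𝓝 a.1) :=
        (continuous_fst.tendsto a).comp hconv
      exact (tendsto_pi_nhds.1 h1) i
    have hconv2 : ∀ j, Tendsto (fun n => fr ((en (φ n)).symm j)) atTop (𝓝 (a.2 j)) := by
      intro j
      have h1 : Tendsto (fun n => (g (φ n)).2) atTop (𝓝 a.2) :=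
        (continuous_snd.tendsto a).comp hconv
      exact (tendsto_pi_nhds.1 h1) j
    have ha1S : ∀ i, a.1 i ∈ S := fun i => haK.1 i (Set.mem_univ i)
    have ha2S : ∀ j, a.2 j ∈ S := fun j => haK.2 j (Set.mem_univ j)
    have fr_inj : Function.Injective fr := fr_anti.injective
    set p : ℕ → Option ℕ := fun i => if h : ∃ j, a.1 i = fr j then some h.choose else none with hpdef
    set r : ℕ → Option ℕ := fun j => if h : ∃ i, a.2 j = fr i then some h.choose else none with hrdef
    have hp_iff : ∀ i j, p i = some j ↔ a.1 i = fr j := by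
      intro i j
      constructor
      · intro h
        by_cases hex2 : ∃ j', a.1 i = fr j'
        · have h1 : p i = some hex2.choose := by rw [hpdef]; exact dif_pos hex2
          have h2 := h1.symm.trans h
          have h3 := Option.some_injective _ h2
          rw [← h3]
          exact hex2.choose_spec
        · rw [hpdef] at h
          simp only [dif_neg hex2] at h
          exact absurd h (by simp)
      · intro h
        have hex2 : ∃ j', a.1 i = fr j' := ⟨j, h⟩
        have h1 : p i = some hex2.choose := by rw [hpdef]; exact dif_pos hex2
        have h2 : hex2.choose = j := fr_inj (hex2.choose_spec.symm.trans h)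
        rw [h1, h2]
    have hr_iff : ∀ j i, r j = some i ↔ a.2 j = fr i := by
      intro j i
      constructor
      · intro h
        by_cases hex2 : ∃ i', a.2 j = fr i'
        · have h1 : r j = some hex2.choose := by rw [hrdef]; exact dif_pos hex2
          have h2 := h1.symm.trans h
          have h3 := Option.some_injective _ h2
          rw [← h3]
          exact hex2.choose_spec
        · rw [hrdef] at h
          simp only [dif_neg hex2] at h
          exact absurd h (by simp)
      · intro h
        have hex2 : ∃ i', a.2 j = fr i' := ⟨i, h⟩
        have h1 : r j = some hex2.choose := by rw [hrdef]; exact dif_pos hex2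
        have h2 : hex2.choose = i := fr_inj (hex2.choose_spec.symm.trans h)
        rw [h1, h2]
    have hp_none : ∀ i, p i = none → a.1 i = 0 := by
      intro i h
      by_cases hex2 : ∃ j', a.1 i = fr j'
      · rw [hpdef] at h
        simp only [dif_pos hex2] at h
        exact absurd h (by simp)
      · rcases ha1S i with h0 | ⟨j, hj⟩
        · exact h0
        · exact absurd ⟨j, hj.symm⟩ hex2
    have hr_none : ∀ j, r j = none → a.2 j = 0 := by
      intro j h
      by_cases hex2 : ∃ i', a.2 j = fr i'
      · rw [hrdef] at h
        simp only [dif_pos hex2] at h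
        exact absurd h (by simp)
      · rcases ha2S j with h0 | ⟨i, hi⟩
        · exact h0
        · exact absurd ⟨i, hi.symm⟩ hex2
    have hp_ev : ∀ i j, p i = some j → ∀ᶠ n in atTop, en (φ n) i = j := by
      intro i j h
      have h1 := (hp_iff i j).1 h
      have h2 := hconv1 i
      rw [h1] at h2
      exact D1 h2
    have hr_ev : ∀ j i, r j = some i → ∀ᶠ n in atTop, (en (φ n)).symm j = i := by
      intro j i h
      have h1 := (hr_iff j i).1 h
      have h2 := hconv2 j
      rw [h1] at h2
      exact D1 h2
    have hp_top : ∀ i, p i = none → Tendsto (fun n => en (φ n) i) atTop atTop := by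
      intro i h
      have h1 := hp_none i h
      have h2 := hconv1 i
      rw [h1] at h2
      exact D2 h2
    have hr_top : ∀ j, r j = none → Tendsto (fun n => (en (φ n)).symm j) atTop atTop := by
      intro j h
      have h1 := hr_none j h
      have h2 := hconv2 j
      rw [h1] at h2
      exact D2 h2
    have hpr : ∀ i j, p i = some j ↔ r j = some i := by
      intro i j
      constructor
      · intro h
        have h2 := hp_ev i j h
        have h3 : ∀ᶠ n in atTop, (en (φ n)).symm j = i := by
          filter_upwards [h2] with n hn
          rw [← hn]
          exact (en (φ n)).symm_apply_apply i
        have h4 : Tendsto (fun n => fr ((en (φ n)).symm j)) atTop (𝓝 (fr i)) := by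
          apply Tendsto.congr' _ tendsto_const_nhds
          filter_upwards [h3] with n hn
          rw [hn]
        have h5 : a.2 j = fr i := tendsto_nhds_unique (hconv2 j) h4
        exact (hr_iff j i).2 h5
      · intro h
        have h2 := hr_ev j i h
        have h3 : ∀ᶠ n in atTop, en (φ n) i = j := by
          filter_upwards [h2] with n hn
          rw [← hn]
          exact (en (φ n)).apply_symm_apply j
        have h4 : Tendsto (fun n => fr (en (φ n) i)) atTop (𝓝 (fr j)) := by
          apply Tendsto.congr' _ tendsto_const_nhds
          filter_upwards [h3] with n hn
          rw [hn]
        have h5 : a.1 i = fr j := tendsto_nhds_unique (hconv1 i) h4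
        exact (hp_iff i j).2 h5
    -- liminf machinery
    have hYs0 : Tendsto (fun j => diagCost (Y j) none) atTop (𝓝 0) := hYs.tendsto_atTop_zero
    have hXs0 : Tendsto (fun i => diagCost (X i) none) atTop (𝓝 0) := hXs.tendsto_atTop_zero
    set v1 : ℕ → ℕ → ℝ≥0∞ := fun n i =>
      if i ≤ en (φ n) i then ENNReal.ofReal (diagCost (X i) (Y (en (φ n) i))) else 0 with hv1def
    set v2 : ℕ → ℕ → ℝ≥0∞ := fun n j =>
      if (en (φ n)).symm j ≤ j then 0
      else ENNReal.ofReal (diagCost (X ((en (φ n)).symm j)) (Y j)) with hv2def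
    have hw1 : ∀ i, w1 X Y p i ≤ liminf (fun n => v1 n i) atTop := by
      intro i
      cases hpc : p i with
      | some j =>
        have hev := hp_ev i j hpc
        have hev2 : ∀ᶠ n in atTop, v1 n i = (if i ≤ j then ENNReal.ofReal (diagCost (X i) (Y j)) else 0) := by
          filter_upwards [hev] with n hn
          rw [hv1def]
          simp only [hn]
        have h1 : liminf (fun n => v1 n i) atTop
            = (if i ≤ j then ENNReal.ofReal (diagCost (X i) (Y j)) else 0) := by
          rw [Filter.liminf_congr hev2]
          exact Filter.liminf_const _
        rw [h1]
        simp only [w1, hpc, Option.elim_some]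
        exact le_refl _
      | none =>
        have htop' := hp_top i hpc
        have hev : ∀ᶠ n in atTop, v1 n i = ENNReal.ofReal (diagCost (X i) (Y (en (φ n) i))) := by
          filter_upwards [htop'.eventually_ge_atTop i] with n hn
          rw [hv1def]
          simp only [if_pos hn]
        have h1 : liminf (fun n => v1 n i) atTop
            = liminf (fun n => ENNReal.ofReal (diagCost (X i) (Y (en (φ n) i)))) atTop :=
          Filter.liminf_congr hev
        have h2 := liminf_aux (X i) (fun n => Y (en (φ n) i)) (hYs0.comp htop')
        have h3 : w1 X Y p i = ENNReal.ofReal (diagCost (X i) none) := by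
          simp only [w1, hpc, Option.elim_none]
        rw [h3, h1]
        exact h2
    have hw2 : ∀ j, w2 X Y r j ≤ liminf (fun n => v2 n j) atTop := by
      intro j
      cases hrc : r j with
      | some i =>
        have hev := hr_ev j i hrc
        have hev2 : ∀ᶠ n in atTop, v2 n j = (if i ≤ j then 0 else ENNReal.ofReal (diagCost (X i) (Y j))) := by
          filter_upwards [hev] with n hn
          rw [hv2def]
          simp only [hn]
        have h1 : liminf (fun n => v2 n j) atTop
            = (if i ≤ j then 0 else ENNReal.ofReal (diagCost (X i) (Y j))) := by
          rw [Filter.liminf_congr hev2]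
          exact Filter.liminf_const _
        rw [h1]
        simp only [w2, hrc, Option.elim_some]
        exact le_refl _
      | none =>
        have htop' := hr_top j hrc
        have hev : ∀ᶠ n in atTop, v2 n j
            = ENNReal.ofReal (diagCost (Y j) (X ((en (φ n)).symm j))) := by
          filter_upwards [htop'.eventually_gt_atTop j] with n hn
          rw [hv2def]
          simp only [if_neg (not_le.2 hn)]
          rw [dc_comm]
        have h1 : liminf (fun n => v2 n j) atTop
            = liminf (fun n => ENNReal.ofReal (diagCost (Y j) (X ((en (φ n)).symm j)))) atTop :=
          Filter.liminf_congr hev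
        have h2 := liminf_aux (Y j) (fun n => X ((en (φ n)).symm j)) (hXs0.comp htop')
        have h3 : w2 X Y r j = ENNReal.ofReal (diagCost (Y j) none) := by
          simp only [w2, hrc, Option.elim_none]
          rw [dc_comm]
        rw [h3, h1]
        exact h2
    have hv12 : ∀ n, (∑' i, v1 n i) + (∑' j, v2 n j) = T (en (φ n)) := by
      intro n
      rw [← Equiv.tsum_eq (en (φ n)) (v2 n), ← ENNReal.tsum_add]
      apply tsum_congr
      intro i
      by_cases h : i ≤ en (φ n) i
      · rw [hv1def, hv2def]
        simp only [if_pos h, Equiv.symm_apply_apply, add_zero]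
      · rw [hv1def, hv2def]
        simp only [if_neg h, Equiv.symm_apply_apply, zero_add]
    have hfat1 : ∑' i, w1 X Y p i ≤ liminf (fun n => ∑' i, v1 n i) atTop :=
      le_trans (ENNReal.tsum_le_tsum hw1) (fatou_tsum v1)
    have hfat2 : ∑' j, w2 X Y r j ≤ liminf (fun n => ∑' j, v2 n j) atTop :=
      le_trans (ENNReal.tsum_le_tsum hw2) (fatou_tsum v2)
    have h4 : liminf (fun n => T (en (φ n))) atTop ≤ m := by
      have hb : ∀ n, T (en (φ n)) ≤ m + ((φ n : ℝ≥0∞) + 1)⁻¹ := fun n => (hen (φ n)).le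
      have hφt : Tendsto (fun n => φ n + 1) atTop atTop :=
        tendsto_atTop_mono (fun n => le_trans (hφ.le_apply) (Nat.le_succ _))
          tendsto_id
      have h0 : Tendsto (fun n => ((φ n : ℝ≥0∞) + 1)⁻¹) atTop (𝓝 0) := by
        have := ENNReal.tendsto_inv_nat_nhds_zero.comp hφt
        apply this.congr
        intro n
        simp only [Function.comp_apply]
        push_cast
        ring_nf
      have hc : Tendsto (fun n => m + ((φ n : ℝ≥0∞) + 1)⁻¹) atTop (𝓝 (m + 0)) :=
        tendsto_const_nhds.add h0
      have hlim : liminf (fun n => m + ((φ n : ℝ≥0∞) + 1)⁻¹) atTop = m + 0 := hc.liminf_eq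
      calc liminf (fun n => T (en (φ n))) atTop
          ≤ liminf (fun n => m + ((φ n : ℝ≥0∞) + 1)⁻¹) atTop :=
            Filter.liminf_le_liminf (Filter.Eventually.of_forall hb)
        _ = m := by rw [hlim, add_zero]
    have hWm : (∑' i, w1 X Y p i) + (∑' j, w2 X Y r j) ≤ m := by
      have h1 : (∑' i, w1 X Y p i) + (∑' j, w2 X Y r j)
          ≤ liminf (fun n => ∑' i, v1 n i) atTop + liminf (fun n => ∑' j, v2 n j) atTop :=
        add_le_add hfat1 hfat2
      have h2 : liminf (fun n => ∑' i, v1 n i) atTop + liminf (fun n => ∑' j, v2 n j) atTop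
          ≤ liminf (fun n => (∑' i, v1 n i) + ∑' j, v2 n j) atTop :=
        liminf_add_le' _ _
      have h3 : liminf (fun n => (∑' i, v1 n i) + ∑' j, v2 n j) atTop
          = liminf (fun n => T (en (φ n))) atTop := by
        apply Filter.liminf_congr
        apply Filter.Eventually.of_forall
        intro n
        exact hv12 n
      calc (∑' i, w1 X Y p i) + (∑' j, w2 X Y r j) ≤ _ := h1
        _ ≤ _ := h2
        _ = _ := h3
        _ ≤ m := h4
    obtain ⟨e, he⟩ := assemble X Y p r hX hY hpr
    refine ⟨e, fun e' => ?_⟩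
    calc T e ≤ (∑' i, w1 X Y p i) + (∑' j, w2 X Y r j) := he
      _ ≤ m := hWm
      _ ≤ T e' := iInf_le T e'

end Main
end DiagProofAux


/-- The infimum defining the squared L²-Wasserstein distance between two
persistence diagrams is attained by some bijection. -/
theorem infimum_attained_L2_wasserstein
    (X Y : ℕ → Option (EuclideanSpace ℝ (Fin 2)))
    (hX : {i | X i = none}.Infinite) (hY : {i | Y i = none}.Infinite)
    (hXs : Summable fun i => diagCost (X i) none)
    (hYs : Summable fun i => diagCost (Y i) none) :
    ∃ e : ℕ ≃ ℕ, ∑' i, diagCost (X i) (Y (e i)) =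
      ⨅ e' : ℕ ≃ ℕ, ∑' i, diagCost (X i) (Y (e' i)) := by
  classical
  have hnn : ∀ (e : ℕ ≃ ℕ) (i : ℕ), 0 ≤ diagCost (X i) (Y (e i)) :=
    fun e i => DiagProofAux.dc_nonneg _ _
  have hbdd : BddBelow (Set.range fun e' : ℕ ≃ ℕ => ∑' i, diagCost (X i) (Y (e' i))) := by
    refine ⟨0, ?_⟩
    rintro x ⟨e', rfl⟩
    exact tsum_nonneg (hnn e')
  by_cases hall : ∀ e : ℕ ≃ ℕ, Summable fun i => diagCost (X i) (Y (e i))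
  · obtain ⟨e₀, he₀⟩ := DiagProofAux.exists_min_ennreal X Y hX hY hXs hYs
    have hofReal : ∀ e : ℕ ≃ ℕ, ENNReal.ofReal (∑' i, diagCost (X i) (Y (e i)))
        = ∑' i, ENNReal.ofReal (diagCost (X i) (Y (e i))) :=
      fun e => ENNReal.ofReal_tsum_of_nonneg (hnn e) (hall e)
    have hle : ∀ e : ℕ ≃ ℕ,
        (∑' i, diagCost (X i) (Y (e₀ i))) ≤ ∑' i, diagCost (X i) (Y (e i)) := by
      intro e
      have h1 := he₀ e
      rw [← hofReal e₀, ← hofReal e] at h1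
      exact (ENNReal.ofReal_le_ofReal_iff (tsum_nonneg (hnn e))).1 h1
    exact ⟨e₀, le_antisymm (le_ciInf hle) (ciInf_le hbdd e₀)⟩
  · push_neg at hall
    obtain ⟨e, he⟩ := hall
    have h0 : ∑' i, diagCost (X i) (Y (e i)) = 0 := tsum_eq_zero_of_not_summable he
    refine ⟨e, le_antisymm ?_ (ciInf_le hbdd e)⟩
    rw [h0]
    exact le_ciInf fun e' => tsum_nonneg (hnn e')
end

section
/- Let X, Y : Fin n → E be configurations and let σ be an optimal pairing between X and Y, i.e. ∑ i, ‖X i − Y (σ i)‖² = min over permutations τ of ∑ i, ‖X i − Y (τ i)‖². Define the interpolating path γ : [0,1] → (Fin n → E) by γ t i = (1−t) • X i + t • Y (σ i). Then for all s, t ∈ [0,1], D(γ s, γ t) = |s − t| · D(X, Y); in particular γ is a (minimal) geodesic from X to Y for the L²-matching distance. -/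
open scoped RealInnerProductSpace

/-- The squared L²-matching distance between two configurations of `n` points. -/
noncomputable def sqD {E : Type*} [NormedAddCommGroup E] [InnerProductSpace ℝ E] {n : ℕ}
    (X Y : Fin n → E) : ℝ :=
  ⨅ σ : Equiv.Perm (Fin n), ∑ i, ‖X i - Y (σ i)‖ ^ 2

/-- The L²-matching distance between two configurations of `n` points. -/
noncomputable def matchD {E : Type*} [NormedAddCommGroup E] [InnerProductSpace ℝ E] {n : ℕ}
    (X Y : Fin n → E) : ℝ :=
  Real.sqrt (sqD X Y)

section Aux

variable {E : Type*} [NormedAddCommGroup E] [InnerProductSpace ℝ E] {n : ℕ}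

lemma sqD_le (X Y : Fin n → E) (τ : Equiv.Perm (Fin n)) :
    sqD X Y ≤ ∑ i, ‖X i - Y (τ i)‖ ^ 2 :=
  ciInf_le (Set.Finite.bddBelow (Set.finite_range _)) τ

omit [InnerProductSpace ℝ E] in
lemma sqrt_sum_sq_eq_norm (u : Fin n → E) :
    Real.sqrt (∑ i, ‖u i‖ ^ 2) = ‖(WithLp.equiv 2 (Fin n → E)).symm u‖ := by
  have h := PiLp.norm_sq_eq_of_L2 (fun _ : Fin n => E) ((WithLp.equiv 2 (Fin n → E)).symm u)
  simp only [WithLp.equiv_symm_apply, PiLp.toLp_apply] at h ⊢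
  rw [← h, Real.sqrt_sq (norm_nonneg _)]

omit [InnerProductSpace ℝ E] in
lemma minkowski (u v : Fin n → E) :
    Real.sqrt (∑ i, ‖u i + v i‖ ^ 2) ≤
      Real.sqrt (∑ i, ‖u i‖ ^ 2) + Real.sqrt (∑ i, ‖v i‖ ^ 2) := by
  rw [sqrt_sum_sq_eq_norm, sqrt_sum_sq_eq_norm, sqrt_sum_sq_eq_norm]
  exact norm_add_le ((WithLp.equiv 2 (Fin n → E)).symm u) ((WithLp.equiv 2 (Fin n → E)).symm v)

lemma sqD_comm (X Y : Fin n → E) : sqD X Y = sqD Y X := by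
  have key : ∀ X Y : Fin n → E, sqD X Y ≤ sqD Y X := by
    intro X Y
    refine le_ciInf fun τ => (sqD_le X Y τ⁻¹).trans_eq ?_
    rw [← Equiv.sum_comp τ (fun i => ‖X i - Y (τ⁻¹ i)‖ ^ 2)]
    simp [norm_sub_rev]
  exact le_antisymm (key X Y) (key Y X)

lemma matchD_comm (X Y : Fin n → E) : matchD X Y = matchD Y X := by
  rw [matchD, matchD, sqD_comm]

lemma matchD_triangle (X Y Z : Fin n → E) : matchD X Z ≤ matchD X Y + matchD Y Z := by
  obtain ⟨α, hα⟩ := Finite.exists_min (fun τ : Equiv.Perm (Fin n) => ∑ i, ‖X i - Y (τ i)‖ ^ 2)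
  obtain ⟨β, hβ⟩ := Finite.exists_min (fun τ : Equiv.Perm (Fin n) => ∑ i, ‖Y i - Z (τ i)‖ ^ 2)
  have hXY : sqD X Y = ∑ i, ‖X i - Y (α i)‖ ^ 2 :=
    le_antisymm (sqD_le X Y α) (le_ciInf hα)
  have hYZ : sqD Y Z = ∑ i, ‖Y i - Z (β i)‖ ^ 2 :=
    le_antisymm (sqD_le Y Z β) (le_ciInf hβ)
  have h1 : matchD X Z ≤ Real.sqrt (∑ i, ‖X i - Z ((α.trans β) i)‖ ^ 2) :=
    Real.sqrt_le_sqrt (sqD_le X Z (α.trans β))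
  refine h1.trans ?_
  have h2 : ∀ i, X i - Z ((α.trans β) i) = (X i - Y (α i)) + (Y (α i) - Z (β (α i))) := by
    intro i; simp only [Equiv.trans_apply]; abel
  calc Real.sqrt (∑ i, ‖X i - Z ((α.trans β) i)‖ ^ 2)
      = Real.sqrt (∑ i, ‖(X i - Y (α i)) + (Y (α i) - Z (β (α i)))‖ ^ 2) := by
        simp only [h2]
    _ ≤ Real.sqrt (∑ i, ‖X i - Y (α i)‖ ^ 2) +
          Real.sqrt (∑ i, ‖Y (α i) - Z (β (α i))‖ ^ 2) := minkowski _ _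
    _ = matchD X Y + matchD Y Z := by
        rw [matchD, matchD, hXY, hYZ, ← Equiv.sum_comp α (fun i => ‖Y i - Z (β i)‖ ^ 2)]

end Aux

/-- The linear interpolation along an optimal pairing is a (minimal) geodesic:
`D(γ s, γ t) = |s − t| · D(X, Y)` for `s, t ∈ [0,1]`. -/
theorem interpolation_is_geodesic
    {E : Type*} [NormedAddCommGroup E] [InnerProductSpace ℝ E] {n : ℕ}
    (X Y : Fin n → E) (σ : Equiv.Perm (Fin n))
    (hσ : ∑ i, ‖X i - Y (σ i)‖ ^ 2 = sqD X Y)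
    (γ : ℝ → Fin n → E) (hγ : ∀ t i, γ t i = (1 - t) • X i + t • Y (σ i)) :
    ∀ s ∈ Set.Icc (0 : ℝ) 1, ∀ t ∈ Set.Icc (0 : ℝ) 1,
      matchD (γ s) (γ t) = |s - t| * matchD X Y := by
  have hsqrt : ∀ c : ℝ, Real.sqrt (c ^ 2 * sqD X Y) = |c| * matchD X Y := by
    intro c
    rw [Real.sqrt_mul (sq_nonneg c), Real.sqrt_sq_eq_abs, matchD]
  have hscale : ∀ c : ℝ, ∀ w : Fin n → E,
      (∑ i, ‖c • (w i)‖ ^ 2) = c ^ 2 * ∑ i, ‖w i‖ ^ 2 := by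
    intro c w
    rw [Finset.mul_sum]
    refine Finset.sum_congr rfl fun i _ => ?_
    rw [norm_smul, mul_pow, Real.norm_eq_abs, sq_abs]
  -- upper bound
  have hub : ∀ s t : ℝ, matchD (γ s) (γ t) ≤ |s - t| * matchD X Y := by
    intro s t
    have h1 : sqD (γ s) (γ t) ≤ (s - t) ^ 2 * sqD X Y := by
      have h := sqD_le (γ s) (γ t) 1
      simp only [Equiv.Perm.coe_one, id_eq] at h
      refine h.trans_eq ?_
      have hterm : ∀ i, γ s i - γ t i = (s - t) • (Y (σ i) - X i) := by
        intro i; rw [hγ, hγ]; module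
      simp only [hterm]
      rw [hscale, ← hσ]
      congr 1
      exact Finset.sum_congr rfl fun i _ => by rw [norm_sub_rev]
    calc matchD (γ s) (γ t) ≤ Real.sqrt ((s - t) ^ 2 * sqD X Y) := Real.sqrt_le_sqrt h1
      _ = |s - t| * matchD X Y := hsqrt _
  -- distance from X to γ s
  have hX : ∀ s : ℝ, 0 ≤ s → matchD X (γ s) ≤ s * matchD X Y := by
    intro s hs
    have h1 : sqD X (γ s) ≤ s ^ 2 * sqD X Y := by
      have h := sqD_le X (γ s) 1
      simp only [Equiv.Perm.coe_one, id_eq] at h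
      refine h.trans_eq ?_
      have hterm : ∀ i, X i - γ s i = s • (X i - Y (σ i)) := by
        intro i; rw [hγ]; module
      simp only [hterm]
      rw [hscale, hσ]
    calc matchD X (γ s) ≤ Real.sqrt (s ^ 2 * sqD X Y) := Real.sqrt_le_sqrt h1
      _ = |s| * matchD X Y := hsqrt _
      _ = s * matchD X Y := by rw [abs_of_nonneg hs]
  -- distance from γ t to Y
  have hY : ∀ t : ℝ, t ≤ 1 → matchD (γ t) Y ≤ (1 - t) * matchD X Y := by
    intro t ht
    have h1 : sqD (γ t) Y ≤ (1 - t) ^ 2 * sqD X Y := by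
      have h := sqD_le (γ t) Y σ
      refine h.trans_eq ?_
      have hterm : ∀ i, γ t i - Y (σ i) = (1 - t) • (X i - Y (σ i)) := by
        intro i; rw [hγ]; module
      simp only [hterm]
      rw [hscale, hσ]
    calc matchD (γ t) Y ≤ Real.sqrt ((1 - t) ^ 2 * sqD X Y) := Real.sqrt_le_sqrt h1
      _ = |1 - t| * matchD X Y := hsqrt _
      _ = (1 - t) * matchD X Y := by rw [abs_of_nonneg (by linarith)]
  -- lower bound for s ≤ t in [0,1]
  have hlb : ∀ s t : ℝ, 0 ≤ s → s ≤ t → t ≤ 1 →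
      (t - s) * matchD X Y ≤ matchD (γ s) (γ t) := by
    intro s t hs hst ht
    have htri : matchD X Y ≤ matchD X (γ s) + (matchD (γ s) (γ t) + matchD (γ t) Y) :=
      (matchD_triangle X (γ s) Y).trans
        (by linarith [matchD_triangle (γ s) (γ t) Y])
    have h1 := hX s hs
    have h2 := hY t ht
    nlinarith [htri]
  -- conclude
  intro s hs t ht
  rcases le_total s t with h | h
  · refine le_antisymm (hub s t) ?_
    have := hlb s t hs.1 h ht.2
    rwa [abs_of_nonpos (by linarith), neg_sub]
  · rw [matchD_comm]
    refine le_antisymm (hub t s |>.trans_eq (by rw [abs_sub_comm])) ?_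
    have := hlb t s ht.1 h hs.2
    rwa [abs_of_nonneg (show (0:ℝ) ≤ s - t by linarith)]
end

section
/- (Non-uniqueness of geodesics at arbitrarily small scales; the space of persistence diagrams is not CAT(k) for any k > 0.) For every ε > 0 there exist configurations X, Y, M₁, M₂ : Fin 2 → EuclideanSpace ℝ (Fin 2) such that 0 < D(X,Y) < ε, D(X,M₁) = D(M₁,Y) = D(X,Y)/2, D(X,M₂) = D(M₂,Y) = D(X,Y)/2, and M₂ is not a relabeling of M₁ (there is no permutation σ of Fin 2 with M₂ = M₁ ∘ σ); hence X and Y admit two distinct midpoints. -/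
private lemma sqD_fin_two {E : Type*} [NormedAddCommGroup E] [InnerProductSpace ℝ E]
    (X Y : Fin 2 → E) :
    sqD X Y = min (‖X 0 - Y 0‖^2 + ‖X 1 - Y 1‖^2) (‖X 0 - Y 1‖^2 + ‖X 1 - Y 0‖^2) := by
  have hperm : ∀ σ : Equiv.Perm (Fin 2), σ = 1 ∨ σ = Equiv.swap 0 1 := by decide
  have hbdd : BddBelow (Set.range fun σ : Equiv.Perm (Fin 2) => ∑ i, ‖X i - Y (σ i)‖ ^ 2) :=
    (Set.finite_range _).bddBelow
  apply le_antisymm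
  · apply le_min
    · exact le_trans (ciInf_le hbdd 1) (by simp [Fin.sum_univ_two])
    · exact le_trans (ciInf_le hbdd (Equiv.swap 0 1)) (by simp [Fin.sum_univ_two])
  · apply le_ciInf
    intro σ
    rcases hperm σ with h | h <;> subst h
    · exact le_trans (min_le_left _ _) (by simp [Fin.sum_univ_two])
    · exact le_trans (min_le_right _ _) (by simp [Fin.sum_univ_two])

private noncomputable def pt (x y : ℝ) : EuclideanSpace ℝ (Fin 2) := (WithLp.equiv 2 _).symm ![x, y]

private lemma pt_sub (a b c d : ℝ) : pt a b - pt c d = pt (a-c) (b-d) := by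
  ext i; fin_cases i <;> simp [pt]

private lemma norm_pt_sq (x y : ℝ) : ‖pt x y‖^2 = x^2 + y^2 := by
  rw [EuclideanSpace.norm_eq, Real.sq_sqrt (by positivity)]
  simp [pt, Fin.sum_univ_two]

/-- Non-uniqueness of geodesics at arbitrarily small scales: for every `ε > 0`
there are configurations `X, Y` at positive distance `< ε` admitting two distinct
midpoints `M₁, M₂` (not relabelings of each other). Hence the space of persistence
diagrams is not CAT(k) for any `k > 0`. -/
theorem two_distinct_midpoints_at_all_scales :
    ∀ ε > (0 : ℝ), ∃ X Y M₁ M₂ : Fin 2 → EuclideanSpace ℝ (Fin 2),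
      0 < matchD X Y ∧ matchD X Y < ε ∧
      matchD X M₁ = matchD X Y / 2 ∧ matchD M₁ Y = matchD X Y / 2 ∧
      matchD X M₂ = matchD X Y / 2 ∧ matchD M₂ Y = matchD X Y / 2 ∧
      ¬ ∃ σ : Equiv.Perm (Fin 2), M₂ = M₁ ∘ σ := by
  intro ε hε
  obtain ⟨δ, hδ, hlt⟩ : ∃ δ : ℝ, 0 < δ ∧ δ * Real.sqrt 2 < ε := by
    refine ⟨ε / 2, by positivity, ?_⟩
    have h2 : Real.sqrt 2 < 2 := by
      nlinarith [Real.sq_sqrt (show (0:ℝ) ≤ 2 by norm_num), Real.sqrt_nonneg 2]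
    nlinarith [Real.sqrt_nonneg 2]
  set X : Fin 2 → EuclideanSpace ℝ (Fin 2) := ![pt 0 0, pt δ δ] with hX
  set Y : Fin 2 → EuclideanSpace ℝ (Fin 2) := ![pt δ 0, pt 0 δ] with hY
  set M₁ : Fin 2 → EuclideanSpace ℝ (Fin 2) := ![pt (δ/2) 0, pt (δ/2) δ] with hM₁
  set M₂ : Fin 2 → EuclideanSpace ℝ (Fin 2) := ![pt 0 (δ/2), pt δ (δ/2)] with hM₂
  have e1 : sqD X Y = 2 * δ^2 := by
    rw [sqD_fin_two]
    simp only [hX, hY, Matrix.cons_val_zero, Matrix.cons_val_one, Matrix.head_cons,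
      pt_sub, norm_pt_sq]
    rw [min_eq_left (by nlinarith)]; ring
  have e2 : sqD X M₁ = δ^2 / 2 := by
    rw [sqD_fin_two]
    simp only [hX, hM₁, Matrix.cons_val_zero, Matrix.cons_val_one, Matrix.head_cons,
      pt_sub, norm_pt_sq]
    rw [min_eq_left (by nlinarith)]; ring
  have e3 : sqD M₁ Y = δ^2 / 2 := by
    rw [sqD_fin_two]
    simp only [hY, hM₁, Matrix.cons_val_zero, Matrix.cons_val_one, Matrix.head_cons,
      pt_sub, norm_pt_sq]
    rw [min_eq_left (by nlinarith)]; ring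
  have e4 : sqD X M₂ = δ^2 / 2 := by
    rw [sqD_fin_two]
    simp only [hX, hM₂, Matrix.cons_val_zero, Matrix.cons_val_one, Matrix.head_cons,
      pt_sub, norm_pt_sq]
    rw [min_eq_left (by nlinarith)]; ring
  have e5 : sqD M₂ Y = δ^2 / 2 := by
    rw [sqD_fin_two]
    simp only [hY, hM₂, Matrix.cons_val_zero, Matrix.cons_val_one, Matrix.head_cons,
      pt_sub, norm_pt_sq]
    rw [min_eq_right (by nlinarith)]; ring
  have hXY : matchD X Y = δ * Real.sqrt 2 := by
    rw [matchD, e1, show 2 * δ^2 = (δ * Real.sqrt 2)^2 by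
      have h2 : Real.sqrt 2 ^ 2 = 2 := Real.sq_sqrt (by norm_num)
      linear_combination (-δ^2) * h2]
    exact Real.sqrt_sq (by positivity)
  have hhalf : Real.sqrt (δ^2 / 2) = matchD X Y / 2 := by
    rw [hXY, show δ^2 / 2 = (δ * Real.sqrt 2 / 2)^2 by
      have h2 : Real.sqrt 2 ^ 2 = 2 := Real.sq_sqrt (by norm_num)
      linear_combination (-(δ^2)/4) * h2]
    exact Real.sqrt_sq (by positivity)
  refine ⟨X, Y, M₁, M₂, ?_, ?_, ?_, ?_, ?_, ?_, ?_⟩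
  · rw [hXY]; positivity
  · rw [hXY]; exact hlt
  · rw [matchD, e2, hhalf]
  · rw [matchD, e3, hhalf]
  · rw [matchD, e4, hhalf]
  · rw [matchD, e5, hhalf]
  · rintro ⟨σ, hσ⟩
    have h := congrArg (fun v : EuclideanSpace ℝ (Fin 2) => v 0) (congrFun hσ 0)
    have hcase : σ 0 = 0 ∨ σ 0 = 1 := by omega
    rcases hcase with h2 | h2 <;>
      simp only [h2, hM₁, hM₂, Function.comp_apply, Matrix.cons_val_zero,
        Matrix.cons_val_one, Matrix.head_cons, pt] at h <;>
      · simp at h; linarith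
end

section
/- (Quantitative stability of the Fréchet mean under empirical reweighting.) Let E be a real inner product space, m, J ≥ 1, and z : Fin m → Fin J → E. Let y : Fin J → E satisfy y j = (1/m) • ∑_{i=1}^m z i j for every j (each point of y is the arithmetic mean of its m paired points), and set V = (1/m) ∑_{i=1}^m ∑_{j=1}^J ‖y j − z i j‖². Let n > 0, ε ≥ 0, and let ξ : Fin m → ℝ be weights with ∑_{i=1}^m ξ i = n and |ξ i − n/m| ≤ ε·n/m for all i. Then the reweighted means y_n j = (1/n) • ∑_{i=1}^m ξ i • z i j satisfy ∑_{j=1}^J ‖y j − y_n j‖² ≤ ε² · V. -/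
/-- Quantitative stability of the Fréchet mean under empirical reweighting: if each
point `y j` is the arithmetic mean of its paired points `z i j`, `V` is the Fréchet
function value at `y`, and the weights `ξ i` sum to `n` with `|ξ i − n/m| ≤ ε·n/m`,
then the reweighted means `y_n j = (1/n) ∑ᵢ ξ i • z i j` satisfy
`∑ⱼ ‖y j − y_n j‖² ≤ ε² · V`. -/
theorem frechet_mean_reweighting_stability
    {E : Type*} [NormedAddCommGroup E] [InnerProductSpace ℝ E]
    (m J : ℕ) (hm : 1 ≤ m) (hJ : 1 ≤ J)
    (z : Fin m → Fin J → E) (y : Fin J → E)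
    (hy : ∀ j, y j = (1 / m : ℝ) • ∑ i, z i j)
    (V : ℝ) (hV : V = (1 / m : ℝ) * ∑ i, ∑ j, ‖y j - z i j‖ ^ 2)
    (n : ℝ) (hn : 0 < n) (ε : ℝ) (hε : 0 ≤ ε)
    (ξ : Fin m → ℝ) (hsum : ∑ i, ξ i = n) (hξ : ∀ i, |ξ i - n / m| ≤ ε * n / m)
    (yn : Fin J → E) (hyn : ∀ j, yn j = (1 / n : ℝ) • ∑ i, ξ i • z i j) :
    ∑ j, ‖y j - yn j‖ ^ 2 ≤ ε ^ 2 * V := by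
  have hm0 : (0:ℝ) < m := by exact_mod_cast Nat.lt_of_lt_of_le Nat.zero_lt_one hm
  set c : Fin m → ℝ := fun i => 1 / m - ξ i / n with hc
  have hcε : ∀ i, |c i| ≤ ε / m := by
    intro i
    have h1 : c i = (n / m - ξ i) / n := by
      simp only [hc]; field_simp
    rw [h1, abs_div, abs_of_pos hn, abs_sub_comm]
    calc |ξ i - n / m| / n ≤ (ε * n / m) / n := by gcongr; exact hξ i
      _ = ε / m := by field_simp
  have hsumc : ∑ i, c i = 0 := by
    simp only [hc, Finset.sum_sub_distrib, ← Finset.sum_div, hsum]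
    field_simp
    simp
  have hdiff : ∀ j, y j - yn j = ∑ i, c i • (z i j - y j) := by
    intro j
    have : ∑ i, c i • (z i j - y j)
        = (∑ i, c i • z i j) - (∑ i, c i) • y j := by
      rw [Finset.sum_smul]
      simp [smul_sub, Finset.sum_sub_distrib]
    rw [this, hsumc, zero_smul, sub_zero, hy, hyn, Finset.smul_sum, Finset.smul_sum,
      ← Finset.sum_sub_distrib]
    congr 1; ext i
    rw [hc]
    simp [sub_smul, smul_smul]
    ring_nf
  have key : ∀ j, ‖y j - yn j‖ ^ 2 ≤ ε ^ 2 / m * ∑ i, ‖y j - z i j‖ ^ 2 := by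
    intro j
    have h2 : ‖y j - yn j‖ ≤ ∑ i, (ε / m) * ‖y j - z i j‖ := by
      rw [hdiff j]
      refine (norm_sum_le _ _).trans (Finset.sum_le_sum fun i _ => ?_)
      rw [norm_smul, Real.norm_eq_abs, norm_sub_rev]
      exact mul_le_mul_of_nonneg_right (hcε i) (norm_nonneg _)
    have h3 : ‖y j - yn j‖ ^ 2 ≤ (∑ i, (ε / m) * ‖y j - z i j‖) ^ 2 := by
      apply pow_le_pow_left₀ (norm_nonneg _) h2
    refine h3.trans ?_
    rw [← Finset.mul_sum, mul_pow]
    have h4 : (∑ i, ‖y j - z i j‖) ^ 2 ≤ (m : ℝ) * ∑ i, ‖y j - z i j‖ ^ 2 := by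
      simpa using sq_sum_le_card_mul_sum_sq (s := Finset.univ)
        (f := fun i => ‖y j - z i j‖)
    calc (ε / m) ^ 2 * (∑ i, ‖y j - z i j‖) ^ 2
        ≤ (ε / m) ^ 2 * ((m : ℝ) * ∑ i, ‖y j - z i j‖ ^ 2) := by
          apply mul_le_mul_of_nonneg_left h4 (by positivity)
      _ = ε ^ 2 / m * ∑ i, ‖y j - z i j‖ ^ 2 := by
          field_simp
  calc ∑ j, ‖y j - yn j‖ ^ 2 ≤ ∑ j, ε ^ 2 / m * ∑ i, ‖y j - z i j‖ ^ 2 :=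
        Finset.sum_le_sum fun j _ => key j
    _ = ε ^ 2 * V := by
        rw [hV, ← Finset.mul_sum, Finset.sum_comm]
        ring
end

section
/- Let d : ℕ → ℝ satisfy d i ≥ 0 for all i and suppose the family (d i)² is summable. For each j ∈ ℕ suppose the set {i | d i ≥ 2^{−j}} is finite and let N j denote its cardinality. Then ∑'_{j∈ℕ} (N j : ℝ) · 2^{−2j} ≤ (4/3) · ∑'_{i∈ℕ} (d i)². -/
open scoped ENNReal

/-- Summability bound from the compactness argument for persistence diagrams:
if `d i ≥ 0`, `(d i)²` is summable, and `N j` counts the indices with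
`d i ≥ 2⁻ʲ`, then `∑ⱼ N j · 2⁻²ʲ ≤ (4/3) ∑ᵢ (d i)²`. -/
theorem counting_bound_from_summable_sq
    (d : ℕ → ℝ) (hd : ∀ i, 0 ≤ d i) (hsum : Summable fun i => d i ^ 2)
    (hfin : ∀ j : ℕ, {i : ℕ | (2 : ℝ) ^ (-(j : ℤ)) ≤ d i}.Finite)
    (N : ℕ → ℕ) (hN : ∀ j, N j = Nat.card {i : ℕ | (2 : ℝ) ^ (-(j : ℤ)) ≤ d i}) :
    ∑' j : ℕ, (N j : ℝ) * (2 : ℝ) ^ (-(2 * j : ℤ)) ≤ (4 / 3) * ∑' i, d i ^ 2 := by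
  classical
  set S := ∑' i, d i ^ 2 with hSdef
  have hS0 : 0 ≤ S := tsum_nonneg fun i => sq_nonneg _
  -- rewrite the weight as a geometric term
  have hpow : ∀ j : ℕ, (2 : ℝ) ^ (-(2 * j : ℤ)) = (1 / 4 : ℝ) ^ j := by
    intro j
    rw [show (-(2 * j : ℤ)) = (-2) * (j : ℤ) by ring, zpow_mul, zpow_natCast]
    norm_num
  have hpos : ∀ j : ℕ, (0 : ℝ) < (2 : ℝ) ^ (-(j : ℤ)) := fun j => zpow_pos (by norm_num) _
  -- the ENNReal double family
  set F : ℕ → ℕ → ℝ≥0∞ := fun j i =>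
    if (2 : ℝ) ^ (-(j : ℤ)) ≤ d i then ENNReal.ofReal ((1 / 4 : ℝ) ^ j) else 0 with hFdef
  -- Step A : inner sum over i
  have hA : ∀ j, ∑' i, F j i = (N j : ℝ≥0∞) * ENNReal.ofReal ((1 / 4 : ℝ) ^ j) := by
    intro j
    have hfs := hfin j
    have h1 : ∑' i, F j i = ∑ i ∈ hfs.toFinset, F j i := by
      refine tsum_eq_sum fun i hi => ?_
      simp only [Set.Finite.mem_toFinset, Set.mem_setOf_eq] at hi
      exact if_neg hi
    rw [h1]
    have h2 : ∀ i ∈ hfs.toFinset, F j i = ENNReal.ofReal ((1 / 4 : ℝ) ^ j) := by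
      intro i hi
      simp only [Set.Finite.mem_toFinset, Set.mem_setOf_eq] at hi
      exact if_pos hi
    rw [Finset.sum_congr rfl h2, Finset.sum_const, nsmul_eq_mul]
    congr 1
    rw [hN j, Nat.card_coe_set_eq, Set.ncard_eq_toFinset_card _ hfs]
  -- Step C : inner sum over j
  have hC : ∀ i, ∑' j, F j i ≤ ENNReal.ofReal (4 / 3 * d i ^ 2) := by
    intro i
    rcases eq_or_lt_of_le (hd i) with h0 | h0
    · have hz : ∀ j, F j i = 0 := fun j => if_neg (by rw [← h0]; exact not_le.2 (hpos j))
      rw [tsum_congr hz, tsum_zero]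
      exact zero_le
    · -- there is some j with 2^{-j} ≤ d i
      have hex : ∃ j : ℕ, (2 : ℝ) ^ (-(j : ℤ)) ≤ d i := by
        obtain ⟨n, hn⟩ := exists_pow_lt_of_lt_one h0 (by norm_num : (1 / 2 : ℝ) < 1)
        refine ⟨n, le_of_lt ?_⟩
        calc (2 : ℝ) ^ (-(n : ℤ)) = (1 / 2 : ℝ) ^ n := by
              rw [zpow_neg, zpow_natCast, one_div, inv_pow]
          _ < d i := hn
      set j₀ := Nat.find hex with hj₀def
      have hj₀ : (2 : ℝ) ^ (-(j₀ : ℤ)) ≤ d i := Nat.find_spec hex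
      have hiff : ∀ j : ℕ, ((2 : ℝ) ^ (-(j : ℤ)) ≤ d i) ↔ j₀ ≤ j := by
        intro j
        constructor
        · exact fun h => Nat.find_min' hex h
        · intro h
          refine le_trans (zpow_le_zpow_right₀ one_le_two ?_) hj₀
          exact neg_le_neg (Int.ofNat_le.2 h)
      -- split off the first j₀ terms (all zero)
      have hsplit := Summable.sum_add_tsum_nat_add' (f := fun j => F j i) (k := j₀) ENNReal.summable
      have hzero : ∑ j ∈ Finset.range j₀, F j i = 0 := by
        refine Finset.sum_eq_zero fun j hj => ?_
        simp only [Finset.mem_range] at hj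
        refine if_neg fun hc => ?_
        rw [hiff] at hc
        omega
      have htail : ∀ k : ℕ, F (k + j₀) i = ENNReal.ofReal ((1 / 4 : ℝ) ^ j₀) * (ENNReal.ofReal (1 / 4)) ^ k := by
        intro k
        have hc : (2 : ℝ) ^ (-((k + j₀ : ℕ) : ℤ)) ≤ d i := (hiff _).2 (Nat.le_add_left _ _)
        rw [show F (k + j₀) i = ENNReal.ofReal ((1/4:ℝ) ^ (k + j₀)) from if_pos hc]
        rw [pow_add, mul_comm ((1/4:ℝ)^k), ENNReal.ofReal_mul (by positivity), ← ENNReal.ofReal_pow (by norm_num)]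
      have hgeo : ∑' k : ℕ, (ENNReal.ofReal (1 / 4 : ℝ)) ^ k = ENNReal.ofReal (4 / 3) := by
        rw [ENNReal.tsum_geometric]
        rw [show (1 : ℝ≥0∞) = ENNReal.ofReal 1 by simp,
          ← ENNReal.ofReal_sub _ (by norm_num : (0:ℝ) ≤ 1/4),
          ← ENNReal.ofReal_inv_of_pos (by norm_num : (0:ℝ) < 1 - 1/4)]
        norm_num
      calc ∑' j, F j i = ∑ j ∈ Finset.range j₀, F j i + ∑' k, F (k + j₀) i := hsplit.symm
        _ = ∑' k, F (k + j₀) i := by rw [hzero, zero_add]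
        _ = ENNReal.ofReal ((1 / 4 : ℝ) ^ j₀) * ENNReal.ofReal (4 / 3) := by
            rw [tsum_congr htail, ENNReal.tsum_mul_left, hgeo]
        _ = ENNReal.ofReal ((1 / 4 : ℝ) ^ j₀ * (4 / 3)) := by
            rw [ENNReal.ofReal_mul (by positivity)]
        _ ≤ ENNReal.ofReal (4 / 3 * d i ^ 2) := by
            apply ENNReal.ofReal_le_ofReal
            rw [mul_comm]
            apply mul_le_mul_of_nonneg_left ?_ (by norm_num)
            have h1 : (1 / 4 : ℝ) ^ j₀ = ((2 : ℝ) ^ (-(j₀ : ℤ))) ^ 2 := by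
              rw [← zpow_natCast ((2:ℝ) ^ (-(j₀:ℤ))), ← zpow_mul]
              rw [show (-(j₀ : ℤ)) * (2 : ℕ) = (-2) * (j₀ : ℤ) by ring, zpow_mul, zpow_natCast]
              norm_num
            rw [h1]
            exact pow_le_pow_left₀ (le_of_lt (hpos j₀)) hj₀ 2
  -- assemble in ENNReal
  have hB : ∑' j, ∑' i, F j i ≤ ENNReal.ofReal (4 / 3 * S) := by
    rw [ENNReal.tsum_comm]
    calc ∑' i, ∑' j, F j i ≤ ∑' i, ENNReal.ofReal (4 / 3 * d i ^ 2) := ENNReal.tsum_le_tsum hC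
      _ = ENNReal.ofReal (∑' i, 4 / 3 * d i ^ 2) :=
          (ENNReal.ofReal_tsum_of_nonneg (fun i => by positivity) (hsum.mul_left _)).symm
      _ = ENNReal.ofReal (4 / 3 * S) := by rw [tsum_mul_left]
  have hT : ∑' j, (N j : ℝ≥0∞) * ENNReal.ofReal ((1 / 4 : ℝ) ^ j) ≤ ENNReal.ofReal (4 / 3 * S) := by
    rw [← tsum_congr hA]; exact hB
  -- back to ℝ
  have hterm : ∀ j, (N j : ℝ≥0∞) * ENNReal.ofReal ((1 / 4 : ℝ) ^ j)
      = ENNReal.ofReal ((N j : ℝ) * (1 / 4 : ℝ) ^ j) := by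
    intro j
    rw [ENNReal.ofReal_mul (by positivity), ENNReal.ofReal_natCast]
  have hne : ∑' j, (N j : ℝ≥0∞) * ENNReal.ofReal ((1 / 4 : ℝ) ^ j) ≠ ⊤ :=
    ne_top_of_le_ne_top ENNReal.ofReal_ne_top hT
  have hreal : ∑' j : ℕ, (N j : ℝ) * (2 : ℝ) ^ (-(2 * j : ℤ))
      = (∑' j, (N j : ℝ≥0∞) * ENNReal.ofReal ((1 / 4 : ℝ) ^ j)).toReal := by
    rw [ENNReal.tsum_toReal_eq (fun j => by rw [hterm j]; exact ENNReal.ofReal_ne_top)]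
    refine tsum_congr fun j => ?_
    rw [hterm j, ENNReal.toReal_ofReal (by positivity), hpow j]
  rw [hreal]
  calc (∑' j, (N j : ℝ≥0∞) * ENNReal.ofReal ((1 / 4 : ℝ) ^ j)).toReal
      ≤ (ENNReal.ofReal (4 / 3 * S)).toReal := ENNReal.toReal_mono ENNReal.ofReal_ne_top hT
    _ = 4 / 3 * S := ENNReal.toReal_ofReal (by positivity)
end
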